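/- For every $F \in C^{2,2}([0,1]^2)$ and $(x,y) \in [0,1]^2$: $|F(x,y) - ({}_xB_{n_1} \circ {}_yB_{n_2})(F;x,y)| \le \frac{3}{2}\left[\|F^{(2,0)}\|_\infty \frac{x(1-x)}{n_1} + \|F^{(0,2)}\|_\infty \frac{y(1-y)}{n_2}\right]$. -/

import Mathlib

open Finset Set



lemma bp_eval (n ν : ℕ) (x : ℝ) :
    (bernsteinPolynomial ℝ n ν).eval x = (n.choose ν : ℝ) * x ^ ν * (1 - x) ^ (n - ν) := by
  simp [bernsteinPolynomial]

lemma bern_sum_one (n : ℕ) (x : ℝ) :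
    ∑ i ∈ Finset.range (n + 1), (n.choose i : ℝ) * x ^ i * (1 - x) ^ (n - i) = 1 := by
  have := congrArg (Polynomial.eval x) (bernsteinPolynomial.sum ℝ n)
  rw [Polynomial.eval_finset_sum] at this
  simpa [bp_eval] using this

lemma bern_sum_mean (n : ℕ) (x : ℝ) :
    ∑ i ∈ Finset.range (n + 1), (i : ℝ) * ((n.choose i : ℝ) * x ^ i * (1 - x) ^ (n - i))
      = n * x := by
  have := congrArg (Polynomial.eval x) (bernsteinPolynomial.sum_smul ℝ n)
  rw [Polynomial.eval_finset_sum] at this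
  simp only [nsmul_eq_mul, Polynomial.eval_mul, Polynomial.eval_natCast, bp_eval,
    Polynomial.eval_X] at this
  exact this

lemma bern_sum_var (n : ℕ) (x : ℝ) :
    ∑ i ∈ Finset.range (n + 1),
        ((n : ℝ) * x - i) ^ 2 * ((n.choose i : ℝ) * x ^ i * (1 - x) ^ (n - i))
      = n * x * (1 - x) := by
  have := congrArg (Polynomial.eval x) (bernsteinPolynomial.variance ℝ n)
  rw [Polynomial.eval_finset_sum] at this
  simp only [nsmul_eq_mul, Polynomial.eval_mul, Polynomial.eval_pow, Polynomial.eval_sub,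
    Polynomial.eval_natCast, bp_eval, Polynomial.eval_X, Polynomial.eval_one] at this
  rw [← this]

section
variable (g g1 g2 : ℝ → ℝ)

lemma taylor2_bound
    (hg : ∀ s ∈ Set.Icc (0:ℝ) 1, HasDerivWithinAt g (g1 s) (Set.Icc (0:ℝ) 1) s)
    (hg1 : ∀ s ∈ Set.Icc (0:ℝ) 1, HasDerivWithinAt g1 (g2 s) (Set.Icc (0:ℝ) 1) s)
    {M : ℝ} (hM : ∀ s ∈ Set.Icc (0:ℝ) 1, |g2 s| ≤ M)
    {x t : ℝ} (hx : x ∈ Set.Icc (0:ℝ) 1) (ht : t ∈ Set.Icc (0:ℝ) 1) :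
    |g t - g x - g1 x * (t - x)| ≤ M * (t - x) ^ 2 := by
  have hM0 : 0 ≤ M := (abs_nonneg _).trans (hM x hx)
  have lip : ∀ s ∈ Set.Icc (0:ℝ) 1, |g1 s - g1 x| ≤ M * |s - x| := fun s hs =>
    (convex_Icc (0:ℝ) 1).norm_image_sub_le_of_norm_hasDerivWithin_le hg1
      (fun u hu => hM u hu) hx hs
  set S := Set.uIcc x t with hS
  have hsub : S ⊆ Set.Icc (0:ℝ) 1 := Set.uIcc_subset_Icc hx ht
  have hmem : ∀ s ∈ S, |s - x| ≤ |t - x| := by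
    intro s hs
    rcases le_total x t with h | h
    · rw [hS, Set.uIcc_of_le h] at hs
      rw [abs_of_nonneg (by linarith [hs.1]), abs_of_nonneg (by linarith)]
      linarith [hs.2]
    · rw [hS, Set.uIcc_of_ge h] at hs
      rw [abs_of_nonpos (by linarith [hs.2]), abs_of_nonpos (by linarith)]
      linarith [hs.1]
  have hderiv : ∀ s ∈ S, HasDerivWithinAt
      (fun s => g s - g x - g1 x * (s - x)) (g1 s - g1 x) S s := by
    intro s hs
    have h1 : HasDerivWithinAt (fun s => g s - g x) (g1 s) S s :=
      ((hg s (hsub hs)).mono hsub).sub_const (g x)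
    have h2 : HasDerivWithinAt (fun s => g1 x * (s - x)) (g1 x) S s := by
      simpa using ((hasDerivWithinAt_id s S).sub_const x).const_mul (g1 x)
    exact h1.sub h2
  have hbd : ∀ s ∈ S, ‖g1 s - g1 x‖ ≤ M * |t - x| := fun s hs =>
    (lip s (hsub hs)).trans (mul_le_mul_of_nonneg_left (hmem s hs) hM0)
  have key := (convex_uIcc x t).norm_image_sub_le_of_norm_hasDerivWithin_le
    hderiv hbd (Set.left_mem_uIcc) (Set.right_mem_uIcc)
  simp only [sub_self, mul_zero, sub_zero, Real.norm_eq_abs] at key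
  calc |g t - g x - g1 x * (t - x)| ≤ M * |t - x| * |t - x| := key
    _ = M * (t - x) ^ 2 := by rw [mul_assoc, abs_mul_abs_self, sq]

lemma bern1d_bound (n : ℕ) (hn : 0 < n)
    (hg : ∀ s ∈ Set.Icc (0:ℝ) 1, HasDerivWithinAt g (g1 s) (Set.Icc (0:ℝ) 1) s)
    (hg1 : ∀ s ∈ Set.Icc (0:ℝ) 1, HasDerivWithinAt g1 (g2 s) (Set.Icc (0:ℝ) 1) s)
    {M : ℝ} (hM : ∀ s ∈ Set.Icc (0:ℝ) 1, |g2 s| ≤ M)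
    {x : ℝ} (hx : x ∈ Set.Icc (0:ℝ) 1) :
    |g x - ∑ i ∈ Finset.range (n + 1),
        g ((i : ℝ) / n) * ((n.choose i : ℝ) * x ^ i * (1 - x) ^ (n - i))|
      ≤ M * (x * (1 - x) / n) := by
  set p : ℕ → ℝ := fun i => (n.choose i : ℝ) * x ^ i * (1 - x) ^ (n - i) with hp
  have hnn : (0:ℝ) < n := by exact_mod_cast hn
  have hpnn : ∀ i ∈ Finset.range (n + 1), 0 ≤ p i := by
    intro i _
    exact mul_nonneg (mul_nonneg (Nat.cast_nonneg _) (pow_nonneg hx.1 _))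
      (pow_nonneg (by linarith [hx.2]) _)
  have hmemi : ∀ i ∈ Finset.range (n + 1), (i : ℝ) / n ∈ Set.Icc (0:ℝ) 1 := by
    intro i hi
    have hi' : (i : ℝ) ≤ n := by
      exact_mod_cast Nat.lt_succ_iff.mp (Finset.mem_range.mp hi)
    exact ⟨div_nonneg (Nat.cast_nonneg _) hnn.le, (div_le_one hnn).mpr hi'⟩
  -- the zero-mean identity
  have hzero : ∑ i ∈ Finset.range (n + 1), ((i : ℝ) / n - x) * p i = 0 := by
    have h1 := bern_sum_one n x
    have h2 := bern_sum_mean n x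
    have : ∑ i ∈ Finset.range (n + 1), ((i : ℝ) / n - x) * p i
        = (1 / n) * (∑ i ∈ Finset.range (n + 1), (i:ℝ) * p i)
          - x * (∑ i ∈ Finset.range (n + 1), p i) := by
      rw [Finset.mul_sum, Finset.mul_sum, ← Finset.sum_sub_distrib]
      refine Finset.sum_congr rfl fun i _ => ?_
      field_simp
    rw [this, h1, h2]
    field_simp
    ring
  have hvar : ∑ i ∈ Finset.range (n + 1), ((i : ℝ) / n - x) ^ 2 * p i
      = x * (1 - x) / n := by
    have h3 := bern_sum_var n x
    have : ∑ i ∈ Finset.range (n + 1), ((i : ℝ) / n - x) ^ 2 * p i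
        = (1 / n^2) * ∑ i ∈ Finset.range (n + 1), ((n:ℝ) * x - i) ^ 2 * p i := by
      rw [Finset.mul_sum]
      refine Finset.sum_congr rfl fun i _ => ?_
      have e : (i:ℝ)/n - x = ((i:ℝ) - n*x)/n := by field_simp
      rw [e, div_pow]
      ring
    rw [this, h3]
    field_simp
  have hrw : g x - ∑ i ∈ Finset.range (n + 1), g ((i : ℝ) / n) * p i
      = ∑ i ∈ Finset.range (n + 1),
          (g x + g1 x * ((i : ℝ) / n - x) - g ((i : ℝ) / n)) * p i := by
    have : ∑ i ∈ Finset.range (n + 1),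
          (g x + g1 x * ((i : ℝ) / n - x) - g ((i : ℝ) / n)) * p i
        = g x * (∑ i ∈ Finset.range (n + 1), p i)
          + g1 x * (∑ i ∈ Finset.range (n + 1), ((i : ℝ) / n - x) * p i)
          - ∑ i ∈ Finset.range (n + 1), g ((i : ℝ) / n) * p i := by
      rw [Finset.mul_sum, Finset.mul_sum, ← Finset.sum_add_distrib,
        ← Finset.sum_sub_distrib]
      refine Finset.sum_congr rfl fun i _ => ?_
      ring
    rw [this, bern_sum_one n x, hzero]
    ring
  rw [hrw]
  calc |∑ i ∈ Finset.range (n + 1),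
          (g x + g1 x * ((i : ℝ) / n - x) - g ((i : ℝ) / n)) * p i|
      ≤ ∑ i ∈ Finset.range (n + 1),
          |(g x + g1 x * ((i : ℝ) / n - x) - g ((i : ℝ) / n))| * p i := by
        refine (Finset.abs_sum_le_sum_abs _ _).trans ?_
        refine Finset.sum_le_sum fun i hi => ?_
        rw [abs_mul, abs_of_nonneg (hpnn i hi)]
    _ ≤ ∑ i ∈ Finset.range (n + 1), M * ((i : ℝ) / n - x) ^ 2 * p i := by
        refine Finset.sum_le_sum fun i hi => ?_
        refine mul_le_mul_of_nonneg_right ?_ (hpnn i hi)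
        have := taylor2_bound g g1 g2 hg hg1 hM hx (hmemi i hi)
        calc |g x + g1 x * ((i : ℝ) / n - x) - g ((i : ℝ) / n)|
            = |g ((i : ℝ) / n) - g x - g1 x * ((i : ℝ) / n - x)| := by
              rw [← abs_neg]; ring_nf
          _ ≤ M * ((i : ℝ) / n - x) ^ 2 := this
    _ = M * (x * (1 - x) / n) := by
        rw [← hvar, Finset.mul_sum]
        exact Finset.sum_congr rfl fun i _ => by ring

end





/-- Tensor product of two classical Bernstein operators on `[0,1]`. -/
noncomputable def bernsteinTensor (n₁ n₂ : ℕ) (F : ℝ → ℝ → ℝ) (x y : ℝ) : ℝ :=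
  ∑ i ∈ Finset.range (n₁ + 1), ∑ j ∈ Finset.range (n₂ + 1),
    F ((i : ℝ) / n₁) ((j : ℝ) / n₂) *
      ((n₁.choose i : ℝ) * x ^ i * (1 - x) ^ (n₁ - i)) *
      ((n₂.choose j : ℝ) * y ^ j * (1 - y) ^ (n₂ - j))

/-- for `F ∈ C^{2,2}([0,1]²)`, the tensor-product Bernstein error is bounded by
`(3/2)(‖F^{(2,0)}‖∞ x(1-x)/n₁ + ‖F^{(0,2)}‖∞ y(1-y)/n₂)`. -/
theorem stmt3 (n₁ n₂ : ℕ) (hn₁ : 0 < n₁) (hn₂ : 0 < n₂)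
    (F Fx Fxx Fy Fyy : ℝ → ℝ → ℝ)
    (hFx : ∀ y ∈ Set.Icc (0:ℝ) 1, ∀ x ∈ Set.Icc (0:ℝ) 1,
      HasDerivWithinAt (fun t => F t y) (Fx x y) (Set.Icc (0:ℝ) 1) x)
    (hFxx : ∀ y ∈ Set.Icc (0:ℝ) 1, ∀ x ∈ Set.Icc (0:ℝ) 1,
      HasDerivWithinAt (fun t => Fx t y) (Fxx x y) (Set.Icc (0:ℝ) 1) x)
    (hFy : ∀ x ∈ Set.Icc (0:ℝ) 1, ∀ y ∈ Set.Icc (0:ℝ) 1,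
      HasDerivWithinAt (fun t => F x t) (Fy x y) (Set.Icc (0:ℝ) 1) y)
    (hFyy : ∀ x ∈ Set.Icc (0:ℝ) 1, ∀ y ∈ Set.Icc (0:ℝ) 1,
      HasDerivWithinAt (fun t => Fy x t) (Fyy x y) (Set.Icc (0:ℝ) 1) y)
    (hFxxc : ContinuousOn (fun p : ℝ × ℝ => Fxx p.1 p.2)
      (Set.Icc (0:ℝ) 1 ×ˢ Set.Icc (0:ℝ) 1))
    (hFyyc : ContinuousOn (fun p : ℝ × ℝ => Fyy p.1 p.2)
      (Set.Icc (0:ℝ) 1 ×ˢ Set.Icc (0:ℝ) 1))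
    (x y : ℝ) (hx : x ∈ Set.Icc (0:ℝ) 1) (hy : y ∈ Set.Icc (0:ℝ) 1) :
    |F x y - bernsteinTensor n₁ n₂ F x y| ≤
      (3 / 2) * ((⨆ p : (Set.Icc (0:ℝ) 1 ×ˢ Set.Icc (0:ℝ) 1 : Set (ℝ × ℝ)),
          |Fxx (p : ℝ × ℝ).1 (p : ℝ × ℝ).2|) * (x * (1 - x) / n₁) +
        (⨆ p : (Set.Icc (0:ℝ) 1 ×ˢ Set.Icc (0:ℝ) 1 : Set (ℝ × ℝ)),
          |Fyy (p : ℝ × ℝ).1 (p : ℝ × ℝ).2|) * (y * (1 - y) / n₂)) := by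
  have hScomp : IsCompact (Set.Icc (0:ℝ) 1 ×ˢ Set.Icc (0:ℝ) 1) :=
    isCompact_Icc.prod isCompact_Icc
  set M₁ : ℝ := ⨆ p : (Set.Icc (0:ℝ) 1 ×ˢ Set.Icc (0:ℝ) 1 : Set (ℝ × ℝ)),
      |Fxx (p : ℝ × ℝ).1 (p : ℝ × ℝ).2| with hM₁def
  set M₂ : ℝ := ⨆ p : (Set.Icc (0:ℝ) 1 ×ˢ Set.Icc (0:ℝ) 1 : Set (ℝ × ℝ)),
      |Fyy (p : ℝ × ℝ).1 (p : ℝ × ℝ).2| with hM₂def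
  have bdd₁ : BddAbove (Set.range fun p : (Set.Icc (0:ℝ) 1 ×ˢ Set.Icc (0:ℝ) 1 :
      Set (ℝ × ℝ)) => |Fxx (p : ℝ × ℝ).1 (p : ℝ × ℝ).2|) := by
    obtain ⟨C, hC⟩ := hScomp.exists_bound_of_continuousOn hFxxc
    exact ⟨C, by rintro v ⟨p, rfl⟩; simpa using hC p p.2⟩
  have bdd₂ : BddAbove (Set.range fun p : (Set.Icc (0:ℝ) 1 ×ˢ Set.Icc (0:ℝ) 1 :
      Set (ℝ × ℝ)) => |Fyy (p : ℝ × ℝ).1 (p : ℝ × ℝ).2|) := by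
    obtain ⟨C, hC⟩ := hScomp.exists_bound_of_continuousOn hFyyc
    exact ⟨C, by rintro v ⟨p, rfl⟩; simpa using hC p p.2⟩
  have le₁ : ∀ s ∈ Set.Icc (0:ℝ) 1, ∀ u ∈ Set.Icc (0:ℝ) 1, |Fxx s u| ≤ M₁ := by
    intro s hs u hu
    exact le_ciSup bdd₁ ⟨(s, u), Set.mem_prod.mpr ⟨hs, hu⟩⟩
  have le₂ : ∀ s ∈ Set.Icc (0:ℝ) 1, ∀ u ∈ Set.Icc (0:ℝ) 1, |Fyy s u| ≤ M₂ := by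
    intro s hs u hu
    exact le_ciSup bdd₂ ⟨(s, u), Set.mem_prod.mpr ⟨hs, hu⟩⟩
  have hM₁0 : 0 ≤ M₁ := (abs_nonneg _).trans (le₁ x hx y hy)
  have hM₂0 : 0 ≤ M₂ := (abs_nonneg _).trans (le₂ x hx y hy)
  set p : ℕ → ℝ := fun i => (n₁.choose i : ℝ) * x ^ i * (1 - x) ^ (n₁ - i) with hp
  set q : ℕ → ℝ := fun j => (n₂.choose j : ℝ) * y ^ j * (1 - y) ^ (n₂ - j) with hq
  have hn₁' : (0:ℝ) < n₁ := by exact_mod_cast hn₁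
  have hpnn : ∀ i ∈ Finset.range (n₁ + 1), 0 ≤ p i := fun i _ =>
    mul_nonneg (mul_nonneg (Nat.cast_nonneg _) (pow_nonneg hx.1 _))
      (pow_nonneg (by linarith [hx.2]) _)
  have hmemi : ∀ i ∈ Finset.range (n₁ + 1), (i : ℝ) / n₁ ∈ Set.Icc (0:ℝ) 1 := by
    intro i hi
    have hi' : (i : ℝ) ≤ n₁ := by
      exact_mod_cast Nat.lt_succ_iff.mp (Finset.mem_range.mp hi)
    exact ⟨div_nonneg (Nat.cast_nonneg _) hn₁'.le, (div_le_one hn₁').mpr hi'⟩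
  set A : ℝ := ∑ i ∈ Finset.range (n₁ + 1), F ((i : ℝ) / n₁) y * p i with hA
  have hT : bernsteinTensor n₁ n₂ F x y = ∑ i ∈ Finset.range (n₁ + 1),
      (∑ j ∈ Finset.range (n₂ + 1), F ((i : ℝ) / n₁) ((j : ℝ) / n₂) * q j) * p i := by
    unfold bernsteinTensor
    refine Finset.sum_congr rfl fun i _ => ?_
    rw [Finset.sum_mul]
    exact Finset.sum_congr rfl fun j _ => by rw [hp, hq]; ring
  have h1 : |F x y - A| ≤ M₁ * (x * (1 - x) / n₁) :=
    bern1d_bound (fun t => F t y) (fun t => Fx t y) (fun t => Fxx t y) n₁ hn₁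
      (fun s hs => hFx y hy s hs) (fun s hs => hFxx y hy s hs)
      (fun s hs => le₁ s hs y hy) hx
  have h2 : |A - bernsteinTensor n₁ n₂ F x y| ≤ M₂ * (y * (1 - y) / n₂) := by
    rw [hT, hA, ← Finset.sum_sub_distrib]
    have : ∀ i ∈ Finset.range (n₁ + 1),
        F ((i : ℝ) / n₁) y * p i
          - (∑ j ∈ Finset.range (n₂ + 1), F ((i : ℝ) / n₁) ((j : ℝ) / n₂) * q j) * p i
        = (F ((i : ℝ) / n₁) y
            - ∑ j ∈ Finset.range (n₂ + 1), F ((i : ℝ) / n₁) ((j : ℝ) / n₂) * q j) * p i :=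
      fun i _ => by ring
    rw [Finset.sum_congr rfl this]
    calc |∑ i ∈ Finset.range (n₁ + 1), (F ((i : ℝ) / n₁) y
            - ∑ j ∈ Finset.range (n₂ + 1), F ((i : ℝ) / n₁) ((j : ℝ) / n₂) * q j) * p i|
        ≤ ∑ i ∈ Finset.range (n₁ + 1), |F ((i : ℝ) / n₁) y
            - ∑ j ∈ Finset.range (n₂ + 1), F ((i : ℝ) / n₁) ((j : ℝ) / n₂) * q j| * p i := by
          refine (Finset.abs_sum_le_sum_abs _ _).trans ?_
          refine Finset.sum_le_sum fun i hi => ?_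
          rw [abs_mul, abs_of_nonneg (hpnn i hi)]
      _ ≤ ∑ i ∈ Finset.range (n₁ + 1), M₂ * (y * (1 - y) / n₂) * p i := by
          refine Finset.sum_le_sum fun i hi => ?_
          refine mul_le_mul_of_nonneg_right ?_ (hpnn i hi)
          exact bern1d_bound (fun t => F ((i : ℝ) / n₁) t) (fun t => Fy ((i : ℝ) / n₁) t)
            (fun t => Fyy ((i : ℝ) / n₁) t) n₂ hn₂
            (fun s hs => hFy _ (hmemi i hi) s hs) (fun s hs => hFyy _ (hmemi i hi) s hs)
            (fun s hs => le₂ _ (hmemi i hi) s hs) hy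
      _ = M₂ * (y * (1 - y) / n₂) := by
          rw [← Finset.mul_sum, hp, bern_sum_one n₁ x, mul_one]
  have key : |F x y - bernsteinTensor n₁ n₂ F x y|
      ≤ M₁ * (x * (1 - x) / n₁) + M₂ * (y * (1 - y) / n₂) := by
    calc |F x y - bernsteinTensor n₁ n₂ F x y|
        = |(F x y - A) + (A - bernsteinTensor n₁ n₂ F x y)| := by ring_nf
      _ ≤ |F x y - A| + |A - bernsteinTensor n₁ n₂ F x y| := abs_add_le _ _
      _ ≤ _ := add_le_add h1 h2
  refine key.trans ?_
  have hb1 : 0 ≤ M₁ * (x * (1 - x) / n₁) :=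
    mul_nonneg hM₁0 (div_nonneg (mul_nonneg hx.1 (by linarith [hx.2])) hn₁'.le)
  have hb2 : 0 ≤ M₂ * (y * (1 - y) / n₂) := by
    have hn₂' : (0:ℝ) < n₂ := by exact_mod_cast hn₂
    exact mul_nonneg hM₂0 (div_nonneg (mul_nonneg hy.1 (by linarith [hy.2])) hn₂'.le)
  linarith
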